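/- Let G be an ℓ-group, G₀ ⊴ G a closed normal subgroup, and (π, V) a smooth representation of G that is admissible as a G₀-representation. Then for every open compact subgroup L of G there exists an open compact subgroup L' ⊆ L of G with L' ∩ G₀ = L ∩ G₀ and V^{L'} = V^{L'∩G₀}. -/

import Mathlib

/-- The stabilizer subgroup of a vector under a representation. -/
def stabSub {G : Type*} [Group G] {V : Type*} [AddCommGroup V] [Module ℂ V]
    (π : Representation ℂ G V) (v : V) : Subgroup G where
  carrier := {g | π g v = v}
  one_mem' := by simp
  mul_mem' := by
    intro a b ha hb
    simp only [Set.mem_setOf_eq] at *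
    rw [map_mul, Module.End.mul_apply, hb, ha]
  inv_mem' := by
    intro a ha
    simp only [Set.mem_setOf_eq] at *
    conv_lhs => rw [← ha]
    rw [← Module.End.mul_apply, ← map_mul, inv_mul_cancel, map_one, Module.End.one_apply]

/-- The fixed submodule of a subgroup under a representation. -/
def fixSub {G : Type*} [Group G] {V : Type*} [AddCommGroup V] [Module ℂ V]
    (π : Representation ℂ G V) (H : Subgroup G) : Submodule ℂ V where
  carrier := {v | ∀ g ∈ H, π g v = v}
  add_mem' := by intro a b ha hb g hg; rw [map_add, ha g hg, hb g hg]
  zero_mem' := by intro g hg; simp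
  smul_mem' := by intro c v hv g hg; rw [map_smul, hv g hg]

/-- Let `G` be an ℓ-group, `G₀ ⊴ G` a closed normal subgroup, and `(π, V)` a smooth
representation of `G` that is admissible as a `G₀`-representation. Then for every open
compact subgroup `L` of `G` there exists an open compact subgroup `L' ⊆ L` with
`L' ∩ G₀ = L ∩ G₀` and `V^{L'} = V^{L' ∩ G₀}`. -/
theorem stmt_15 {G : Type*} [Group G] [TopologicalSpace G] [IsTopologicalGroup G]
    [LocallyCompactSpace G] [TotallyDisconnectedSpace G]
    (G₀ : Subgroup G) [G₀.Normal] (hG₀ : IsClosed (G₀ : Set G))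
    {V : Type*} [AddCommGroup V] [Module ℂ V] (π : Representation ℂ G V)
    -- π is smooth
    (hsmooth : ∀ v : V, ∃ K : Subgroup G, IsOpen (K : Set G) ∧ IsCompact (K : Set G) ∧
      ∀ g ∈ K, π g v = v)
    -- π is admissible as a G₀-representation: for every open compact subgroup K₀ of G₀,
    -- the fixed vectors V^{K₀} span a finite-dimensional subspace
    (hadm : ∀ K₀ : Subgroup G, K₀ ≤ G₀ → IsCompact (K₀ : Set G) →
      (∃ U : Set G, IsOpen U ∧ (K₀ : Set G) = U ∩ (G₀ : Set G)) →
      ∃ s : Finset V, ∀ v : V, (∀ g ∈ K₀, π g v = v) →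
        v ∈ Submodule.span ℂ (s : Set V))
    (L : Subgroup G) (hLo : IsOpen (L : Set G)) (hLc : IsCompact (L : Set G)) :
    ∃ L' : Subgroup G, L' ≤ L ∧ IsOpen (L' : Set G) ∧ IsCompact (L' : Set G) ∧
      L' ⊓ G₀ = L ⊓ G₀ ∧
      ∀ v : V, (∀ g ∈ L' ⊓ G₀, π g v = v) ↔ (∀ g ∈ L', π g v = v) := by
  -- apply admissibility to L ⊓ G₀
  obtain ⟨s, hs⟩ := hadm (L ⊓ G₀) inf_le_right
    (by rw [Subgroup.coe_inf]; exact hLc.inter_right hG₀)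
    ⟨L, hLo, by rw [Subgroup.coe_inf]⟩
  -- the fixed submodule of L ⊓ G₀
  set W : Submodule ℂ V := fixSub π (L ⊓ G₀) with hW
  have hWle : W ≤ Submodule.span ℂ (s : Set V) := fun v hv => hs v hv
  haveI : FiniteDimensional ℂ (Submodule.span ℂ (s : Set V)) := by
    apply FiniteDimensional.span_finset
  haveI : FiniteDimensional ℂ W := Submodule.finiteDimensional_of_le hWle
  have hWfg : W.FG := (Submodule.fg_iff_finiteDimensional W).mpr inferInstance
  obtain ⟨t, ht⟩ := hWfg
  have htW : (t : Set V) ⊆ (W : Set V) := by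
    rw [← ht]; exact Submodule.subset_span
  -- stabilizing subgroups for elements of t
  let Kf : V → Subgroup G := fun x => (hsmooth x).choose
  have hKfo : ∀ x, IsOpen ((Kf x : Set G)) := fun x => (hsmooth x).choose_spec.1
  have hKffix : ∀ x, ∀ g ∈ Kf x, π g x = x := fun x => (hsmooth x).choose_spec.2.2
  -- the open subgroup K
  set K : Subgroup G := L ⊓ ⨅ x : t, Kf x with hK
  have hKo : IsOpen (K : Set G) := by
    rw [hK, Subgroup.coe_inf, Subgroup.coe_iInf]
    exact hLo.inter (isOpen_iInter_of_finite fun x => hKfo x)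
  set L' : Subgroup G := (L ⊓ G₀) ⊔ K with hL'
  have hL'le : L' ≤ L := sup_le inf_le_left inf_le_left
  have hL'o : IsOpen (L' : Set G) := Subgroup.isOpen_mono le_sup_right hKo
  refine ⟨L', hL'le, hL'o, ?_, ?_, ?_⟩
  · have hcl : IsClosed (L' : Set G) := Subgroup.isClosed_of_isOpen L' hL'o
    exact IsCompact.of_isClosed_subset hLc hcl (SetLike.coe_subset_coe.mpr hL'le)
  · have h1 : L ⊓ G₀ ≤ L' := by rw [hL']; exact le_sup_left
    exact le_antisymm (inf_le_inf_right G₀ hL'le) (le_inf h1 inf_le_right)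
  · intro v
    constructor
    · intro hv
      have hv' : v ∈ W := by
        intro g hg
        have hg1 : g ∈ L' := Subgroup.mem_sup_left hg
        exact hv g (Subgroup.mem_inf.mpr ⟨hg1, hg.2⟩)
      -- v ∈ span t = W, each element of t fixed by L'
      have hvspan : v ∈ Submodule.span ℂ (t : Set V) := by rw [ht]; exact hv'
      have hgen : Submodule.span ℂ (t : Set V) ≤ fixSub π L' := by
        rw [Submodule.span_le]
        intro x hx
        have h1 : L ⊓ G₀ ≤ stabSub π x := fun g hg => htW hx g hg
        have h2 : K ≤ stabSub π x := by
          intro g hg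
          have hgi : g ∈ ⨅ y : t, Kf (y : V) := hg.2
          exact hKffix x g (Subgroup.mem_iInf.mp hgi ⟨x, Finset.mem_coe.mp hx⟩)
        have h3 : L' ≤ stabSub π x := sup_le h1 h2
        exact fun g hg => h3 hg
      exact hgen hvspan
    · intro hv g hg
      exact hv g hg.1
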